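/- arXiv:2206.03534 — 3 statements merged into one kernel-verified Lean document; each statement's English description precedes it below -/
import Mathlib

section
/- (Lemma 2.3, Lorentz L^{3/2,1} bound for the truncated Gaussian.) Let x₀ ∈ ℝ³, 0 < r < R < ∞, and T > 0. Then there is a constant C = C(R,r,T) such that for every x ∈ B_r(x₀) and every t ∈ (0,T], ∫₀^∞ ( vol{ y ∈ ℝ³ : ‖y − x₀‖ > R and e^{−‖x−y‖²/(4t)} ≥ s } )^{2/3} ds ≤ C e^{−(R−r)²/(4t)}. (The left-hand side is, up to the fixed factor 3/2, the Lorentz L^{3/2,1} norm in y of the function e^{−‖x−y‖²/(4t)} · 1_{{‖y−x₀‖>R}}(y).) -/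
open MeasureTheory Real Set Metric
open scoped ENNReal NNReal

noncomputable section

abbrev E3 := EuclideanSpace ℝ (Fin 3)

/-- **Lemma 2.3 (Lorentz `L^{3/2,1}` bound for the truncated Gaussian).**
For `0 < r < R` and `T > 0` there is `C = C(R,r,T)` such that for all `x ∈ B_r(x₀)` and
`t ∈ (0,T]`,
`∫₀^∞ (vol{y : ‖y-x₀‖ > R ∧ e^{-‖x-y‖²/(4t)} ≥ s})^{2/3} ds ≤ C e^{-(R-r)²/(4t)}`. -/
theorem truncated_gaussian_L32_1_bound
    (x₀ : E3) (r R T : ℝ) (hr : 0 < r) (hrR : r < R) (hT : 0 < T) :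
    ∃ C > 0, ∀ x ∈ ball x₀ r, ∀ t ∈ Ioc (0:ℝ) T,
      (∫⁻ s in Ioi (0:ℝ),
          (volume {y : E3 | R < ‖y - x₀‖ ∧ s ≤ Real.exp (-‖x - y‖^2 / (4*t))})
            ^ ((2:ℝ)/3))
        ≤ ENNReal.ofReal (C * Real.exp (-(R - r)^2 / (4*t))) := by
  classical
  set V : ℝ≥0∞ := volume (Metric.closedBall (0:E3) 1) with hV
  have hVtop : V ^ ((2:ℝ)/3) ≠ ⊤ :=
    (ENNReal.rpow_lt_top_of_nonneg (by norm_num) measure_closedBall_lt_top.ne).ne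
  set κ : ℝ := (V ^ ((2:ℝ)/3)).toReal + 1 with hκ
  have hκpos : 0 < κ := by positivity
  have hVκ : V ^ ((2:ℝ)/3) ≤ ENNReal.ofReal κ := by
    rw [← ENNReal.ofReal_toReal hVtop]
    exact ENNReal.ofReal_le_ofReal (by simp [hκ])
  refine ⟨κ * ((R - r)^2 + 16 * T), by positivity, ?_⟩
  intro x hx t ht
  obtain ⟨ht0, htT⟩ := ht
  set M : ℝ := Real.exp (-(R - r)^2 / (4*t)) with hM
  have hM0 : 0 < M := Real.exp_pos _
  have hRr : 0 < R - r := by linarith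
  have hM1 : M < 1 := by
    rw [hM]
    rw [← Real.exp_zero]
    exact Real.exp_lt_exp.2
      (div_neg_of_neg_of_pos (neg_lt_zero.2 (pow_pos hRr 2)) (by linarith))
  have hxr : ‖x - x₀‖ < r := by simpa [mem_ball, dist_eq_norm] using hx
  -- distance lower bound on the truncated region
  have hdist : ∀ y : E3, R < ‖y - x₀‖ → R - r < ‖x - y‖ := by
    intro y hy
    have h1 : ‖y - x₀‖ ≤ ‖y - x‖ + ‖x - x₀‖ := norm_sub_le_norm_sub_add_norm_sub y x x₀
    have h2 : ‖y - x‖ = ‖x - y‖ := norm_sub_rev _ _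
    linarith
  -- Claim A : set is empty for s > M
  have claimA : ∀ s : ℝ, M < s →
      {y : E3 | R < ‖y - x₀‖ ∧ s ≤ Real.exp (-‖x - y‖^2 / (4*t))} = ∅ := by
    intro s hs
    ext y
    simp only [mem_setOf_eq, mem_empty_iff_false, iff_false, not_and, not_le]
    intro hy
    have hd := hdist y hy
    have hsq : (R - r)^2 ≤ ‖x - y‖^2 := by nlinarith [norm_nonneg (x - y)]
    have : Real.exp (-‖x - y‖^2 / (4*t)) ≤ M := by
      rw [hM]
      apply Real.exp_le_exp.2
      have h4t : 0 < 4*t := by linarith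
      rw [div_le_div_iff₀ h4t h4t]
      nlinarith
    linarith
  -- Claim B : set inside a closed ball for 0 < s ≤ M
  have claimB : ∀ s : ℝ, 0 < s →
      {y : E3 | R < ‖y - x₀‖ ∧ s ≤ Real.exp (-‖x - y‖^2 / (4*t))}
        ⊆ Metric.closedBall x (Real.sqrt (4*t*Real.log (1/s))) := by
    intro s hs y hy
    obtain ⟨-, hy2⟩ := hy
    have hlog : Real.log s ≤ -‖x - y‖^2 / (4*t) := by
      have := Real.log_le_log hs hy2
      rwa [Real.log_exp] at this
    have hsq : ‖x - y‖^2 ≤ 4*t*Real.log (1/s) := by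
      rw [one_div, Real.log_inv]
      have h4t : 0 < 4*t := by linarith
      rw [le_div_iff₀ h4t] at hlog
      nlinarith
    have : ‖y - x‖ ≤ Real.sqrt (4*t*Real.log (1/s)) := by
      rw [norm_sub_rev]
      exact Real.le_sqrt_of_sq_le hsq
    simpa [Metric.mem_closedBall, dist_eq_norm] using this
  -- the dominating function
  set g : ℝ → ℝ≥0∞ := fun s =>
    (Ioc (0:ℝ) M).indicator
      (fun s => ENNReal.ofReal κ *
        ENNReal.ofReal ((R - r)^2 + 8*t*Real.sqrt M * s ^ (-(1/2) : ℝ))) s with hg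
  -- pointwise bound
  have hpoint : ∀ s ∈ Ioi (0:ℝ),
      (volume {y : E3 | R < ‖y - x₀‖ ∧ s ≤ Real.exp (-‖x - y‖^2 / (4*t))}) ^ ((2:ℝ)/3)
        ≤ g s := by
    intro s hs
    rw [mem_Ioi] at hs
    by_cases hsM : s ≤ M
    · -- inside the indicator
      have hmem : s ∈ Ioc (0:ℝ) M := ⟨hs, hsM⟩
      rw [hg]
      simp only [indicator_of_mem hmem]
      set ρ : ℝ := Real.sqrt (4*t*Real.log (1/s)) with hρ
      have hρ0 : 0 ≤ ρ := Real.sqrt_nonneg _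
      have hlog0 : 0 ≤ Real.log (1/s) :=
        Real.log_nonneg (one_le_one_div hs (by linarith))
      -- real inequality : 4t log(1/s) ≤ (R-r)^2 + 8t √M s^{-1/2}
      have hlogM : Real.log M = -(R - r)^2 / (4*t) := Real.log_exp _
      have hu : 0 < M / s := div_pos hM0 hs
      have hlogMs : Real.log (M/s) ≤ 2 * Real.sqrt (M/s) := by
        have h1 : Real.log (Real.sqrt (M/s)) ≤ Real.sqrt (M/s) - 1 :=
          Real.log_le_sub_one_of_pos (Real.sqrt_pos.2 hu)
        have h2 : Real.log (Real.sqrt (M/s)) = Real.log (M/s) / 2 :=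
          Real.log_sqrt hu.le
        linarith
      have hsqrtMs : Real.sqrt (M/s) = Real.sqrt M * s ^ (-(1/2) : ℝ) := by
        rw [Real.sqrt_div hM0.le, Real.rpow_neg hs.le, ← Real.sqrt_eq_rpow, div_eq_mul_inv]
      have hreal : 4*t*Real.log (1/s) ≤ (R - r)^2 + 8*t*Real.sqrt M * s ^ (-(1/2) : ℝ) := by
        have hsplit : Real.log (1/s) = -Real.log M + Real.log (M/s) := by
          rw [one_div, Real.log_inv, Real.log_div hM0.ne' hs.ne']
          ring
        have h4t : (4:ℝ)*t ≠ 0 := by positivity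
        have hlogM' : 4*t*(-Real.log M) = (R - r)^2 := by
          rw [hlogM]; field_simp
        have h3 : 4*t*Real.log (M/s) ≤ 8*t*Real.sqrt M * s ^ (-(1/2) : ℝ) := by
          have h3' : 4*t*Real.log (M/s) ≤ 4*t*(2*Real.sqrt (M/s)) :=
            mul_le_mul_of_nonneg_left hlogMs (by positivity)
          rw [hsqrtMs] at h3'
          linarith [h3'] <;> nlinarith [h3']
        calc 4*t*Real.log (1/s) = 4*t*(-Real.log M) + 4*t*Real.log (M/s) := by
              rw [hsplit]; ring
          _ ≤ (R - r)^2 + 8*t*Real.sqrt M * s ^ (-(1/2) : ℝ) := by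
              rw [hlogM']; linarith
      -- volume of the ball
      have hball : volume (Metric.closedBall x ρ) = ENNReal.ofReal (ρ^3) * V := by
        rw [hV, MeasureTheory.Measure.addHaar_closedBall' volume x hρ0,
          finrank_euclideanSpace_fin]
      have hρ23 : ((ρ^3 : ℝ)) ^ ((2:ℝ)/3) = 4*t*Real.log (1/s) := by
        rw [← Real.rpow_natCast ρ 3, ← Real.rpow_mul hρ0,
          show ((3:ℕ):ℝ) * ((2:ℝ)/3) = (2:ℝ) by norm_num, Real.rpow_two, hρ,
          Real.sq_sqrt (by positivity)]
      calc (volume {y : E3 | R < ‖y - x₀‖ ∧ s ≤ Real.exp (-‖x - y‖^2 / (4*t))}) ^ ((2:ℝ)/3)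
          ≤ (ENNReal.ofReal (ρ^3) * V) ^ ((2:ℝ)/3) := by
            apply ENNReal.rpow_le_rpow _ (by norm_num)
            rw [← hball]
            exact measure_mono (claimB s hs)
        _ = (ENNReal.ofReal (ρ^3)) ^ ((2:ℝ)/3) * V ^ ((2:ℝ)/3) :=
            ENNReal.mul_rpow_of_nonneg _ _ (by norm_num)
        _ = ENNReal.ofReal ((ρ^3) ^ ((2:ℝ)/3)) * V ^ ((2:ℝ)/3) := by
            rw [← ENNReal.ofReal_rpow_of_nonneg (by positivity) (by norm_num)]
        _ = ENNReal.ofReal (4*t*Real.log (1/s)) * V ^ ((2:ℝ)/3) := by rw [hρ23]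
        _ ≤ ENNReal.ofReal ((R - r)^2 + 8*t*Real.sqrt M * s ^ (-(1/2) : ℝ))
              * ENNReal.ofReal κ :=
            mul_le_mul' (ENNReal.ofReal_le_ofReal hreal) hVκ
        _ = ENNReal.ofReal κ
              * ENNReal.ofReal ((R - r)^2 + 8*t*Real.sqrt M * s ^ (-(1/2) : ℝ)) :=
            mul_comm _ _
    · -- outside : set is empty
      have hMs : M < s := lt_of_not_ge hsM
      rw [claimA s hMs]
      simp only [measure_empty,
        ENNReal.zero_rpow_of_pos (show (0:ℝ) < 2/3 by norm_num)]
      exact zero_le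
  -- integrability and value of the dominating integral
  set f : ℝ → ℝ := fun s => (R - r)^2 + 8*t*Real.sqrt M * s ^ (-(1/2) : ℝ) with hf
  have hII : IntervalIntegrable f volume 0 M :=
    intervalIntegrable_const.add
      ((intervalIntegral.intervalIntegrable_rpow' (by norm_num)).const_mul _)
  have hint : IntegrableOn f (Ioc 0 M) volume :=
    (intervalIntegrable_iff_integrableOn_Ioc_of_le hM0.le).1 hII
  have hnn : 0 ≤ᵐ[volume.restrict (Ioc (0:ℝ) M)] f := by
    filter_upwards [ae_restrict_mem measurableSet_Ioc] with s hs
    have h1 : (0:ℝ) ≤ s ^ (-(1/2) : ℝ) := Real.rpow_nonneg hs.1.le _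
    have h2 : (0:ℝ) ≤ 8*t*Real.sqrt M := by positivity
    have h3 := mul_nonneg h2 h1
    simp only [hf, Pi.zero_apply]
    nlinarith [sq_nonneg (R - r)]
  have hval : ∫ s in Ioc (0:ℝ) M, f s = (R - r)^2 * M + 16*t*M := by
    rw [← intervalIntegral.integral_of_le hM0.le, hf]
    rw [intervalIntegral.integral_add intervalIntegrable_const
      ((intervalIntegral.intervalIntegrable_rpow' (by norm_num)).const_mul _),
      intervalIntegral.integral_const, intervalIntegral.integral_const_mul,
      integral_rpow (Or.inl (by norm_num))]
    have h2 : Real.sqrt M * Real.sqrt M = M := Real.mul_self_sqrt hM0.le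
    rw [show (-(1/2:ℝ)+1) = (1/2:ℝ) by norm_num, Real.zero_rpow (by norm_num),
      ← Real.sqrt_eq_rpow, smul_eq_mul]
    field_simp
    nlinarith [h2]
  calc (∫⁻ s in Ioi (0:ℝ),
          (volume {y : E3 | R < ‖y - x₀‖ ∧ s ≤ Real.exp (-‖x - y‖^2 / (4*t))})
            ^ ((2:ℝ)/3))
      ≤ ∫⁻ s in Ioi (0:ℝ), g s := setLIntegral_mono' measurableSet_Ioi hpoint
    _ = ∫⁻ s in Ioc (0:ℝ) M, ENNReal.ofReal κ * ENNReal.ofReal (f s) := by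
        rw [hg, lintegral_indicator measurableSet_Ioc,
          Measure.restrict_restrict measurableSet_Ioc,
          inter_eq_left.2 Ioc_subset_Ioi_self]
    _ = ENNReal.ofReal κ * ∫⁻ s in Ioc (0:ℝ) M, ENNReal.ofReal (f s) :=
        lintegral_const_mul' _ _ ENNReal.ofReal_ne_top
    _ = ENNReal.ofReal κ * ENNReal.ofReal (∫ s in Ioc (0:ℝ) M, f s) := by
        rw [← ofReal_integral_eq_lintegral_ofReal hint hnn]
    _ ≤ ENNReal.ofReal (κ * ((R - r)^2 + 16*T) * M) := by
        rw [hval, ← ENNReal.ofReal_mul hκpos.le]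
        apply ENNReal.ofReal_le_ofReal
        nlinarith [mul_le_mul_of_nonneg_left
          (show (R - r)^2*M + 16*t*M ≤ ((R - r)^2 + 16*T)*M by
            nlinarith [mul_nonneg (show (0:ℝ) ≤ 16*(T - t) by linarith) hM0.le])
          hκpos.le]
end
end

section
/- (Remark 2.5.) Let x₀ ∈ ℝ³, 0 < r < R < ∞, q ∈ (3,∞), and T > 0. Let u₀ ∈ L^{3,∞}(ℝ³;ℝ³) with the restriction of u₀ to B_R(x₀) in L^q(B_R(x₀)). Then there is a constant C, depending only on R, r, q, T, ‖u₀‖_{L^{3,∞}} and ‖u₀‖_{L^q(B_R(x₀))}, such that for all t ∈ (0,T), ess sup_{x ∈ B_r(x₀)} |(e^{tΔ}u₀)(x)| ≤ C t^{−3/(2q)}. -/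
open MeasureTheory Real Set Metric
open scoped ENNReal NNReal

noncomputable section

/-- The weak-`L³` quasinorm on `ℝ³`. -/
def wL3 {F : Type*} [NormedAddCommGroup F] (f : E3 → F) : ℝ≥0∞ :=
  ⨆ l : ℝ≥0, (l : ℝ≥0∞) * (volume {x : E3 | (l : ℝ) < ‖f x‖}) ^ ((3 : ℝ)⁻¹)

/-- The heat extension `e^{tΔ}u₀`. -/
def heat (t : ℝ) (u₀ : E3 → E3) (x : E3) : E3 :=
  ((4 * π * t) ^ (-(3 : ℝ)/2)) • ∫ y : E3, Real.exp (-‖x - y‖^2 / (4*t)) • u₀ y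

namespace HeatRemark

lemma dist_bound (u₀ : E3 → E3) (l : ℝ≥0) (hl : l ≠ 0) :
    volume {x : E3 | (l:ℝ) < ‖u₀ x‖} ≤ (wL3 u₀ / l) ^ 3 := by
  have h1 : (l : ℝ≥0∞) * (volume {x : E3 | (l : ℝ) < ‖u₀ x‖}) ^ ((3:ℝ)⁻¹) ≤ wL3 u₀ :=
    le_iSup (fun l : ℝ≥0 => (l : ℝ≥0∞) * (volume {x : E3 | (l : ℝ) < ‖u₀ x‖}) ^ ((3 : ℝ)⁻¹)) l
  have h2 : (volume {x : E3 | (l : ℝ) < ‖u₀ x‖}) ^ ((3:ℝ)⁻¹) ≤ wL3 u₀ / l := by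
    rw [ENNReal.le_div_iff_mul_le (Or.inl (by exact_mod_cast hl)) (Or.inl ENNReal.coe_ne_top)]
    rwa [mul_comm]
  calc volume {x : E3 | (l:ℝ) < ‖u₀ x‖}
      = ((volume {x : E3 | (l:ℝ) < ‖u₀ x‖}) ^ ((3:ℝ)⁻¹)) ^ (3:ℕ) := by
        rw [← ENNReal.rpow_natCast ((volume {x : E3 | (l:ℝ) < ‖u₀ x‖}) ^ ((3:ℝ)⁻¹)) 3,
          ← ENNReal.rpow_mul]
        norm_num
    _ ≤ (wL3 u₀ / l) ^ (3:ℕ) := pow_le_pow_left' h2 3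

lemma dyadic_le (c : ℝ≥0) :
    (c : ℝ≥0∞) ≤ 1 + ∑' k : ℕ, (if (2:ℝ≥0)^k ≤ c then ((2:ℝ≥0∞))^(k+1) else 0) := by
  by_cases h1 : (c:ℝ≥0∞) ≤ 1
  · exact h1.trans le_self_add
  push_neg at h1
  have h1' : (1:ℝ≥0) < c := by exact_mod_cast h1
  have hex : ∃ n : ℕ, c < 2 ^ n := pow_unbounded_of_one_lt c (by norm_num)
  classical
  have hn₀ : c < 2 ^ (Nat.find hex) := Nat.find_spec hex
  have hne : Nat.find hex ≠ 0 := by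
    intro h
    rw [h] at hn₀
    simp only [pow_zero] at hn₀
    exact absurd hn₀ (not_lt.2 h1'.le)
  obtain ⟨m, hm⟩ : ∃ m, Nat.find hex = m + 1 :=
    ⟨Nat.find hex - 1, (Nat.succ_pred_eq_of_ne_zero hne).symm⟩
  have hmlt : ¬ c < 2 ^ m := Nat.find_min hex (by omega)
  have hif : (if (2:ℝ≥0)^m ≤ c then ((2:ℝ≥0∞))^(m+1) else 0) = (2:ℝ≥0∞)^(m+1) :=
    if_pos (not_lt.1 hmlt)
  have hcle : (c:ℝ≥0∞) ≤ (2:ℝ≥0∞)^(m+1) := by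
    rw [hm] at hn₀
    exact_mod_cast hn₀.le
  refine hcle.trans (le_trans ?_ le_add_self)
  rw [← hif]
  exact ENNReal.le_tsum m

lemma local_L1 {v : E3 → E3} (hv : Measurable v) {W : ℝ≥0}
    (hW : ∀ l : ℝ≥0, l ≠ 0 → volume {x : E3 | (l:ℝ) < ‖v x‖} ≤ ((W:ℝ≥0∞) / l) ^ 3) :
    ∃ cW : ℝ≥0∞, cW ≠ ⊤ ∧
      ∀ A : Set E3, (∫⁻ y in A, (‖v y‖₊ : ℝ≥0∞) ∂volume) ≤ volume A + cW := by
  classical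
  set S : ℕ → Set E3 := fun k => {y : E3 | (2:ℝ≥0)^k ≤ ‖v y‖₊} with hS
  have hSmeas : ∀ k, MeasurableSet (S k) := fun k =>
    measurableSet_le measurable_const hv.nnnorm
  have hSvol : ∀ k, volume (S k) ≤ ((W:ℝ≥0∞) / ((2:ℝ≥0)^k / 2 : ℝ≥0)) ^ 3 := by
    intro k
    have hsub : S k ⊆ {x : E3 | (((2:ℝ≥0)^k / 2 : ℝ≥0) : ℝ) < ‖v x‖} := by
      intro y hy
      have h2 : ((2:ℝ≥0)^k / 2 : ℝ≥0) < (2:ℝ≥0)^k := by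
        have hpos : (0:ℝ≥0) < (2:ℝ≥0)^k := by positivity
        rw [div_lt_iff₀ (by norm_num : (0:ℝ≥0) < 2)]
        exact lt_mul_of_one_lt_right hpos one_lt_two
      have hy' : ((2:ℝ≥0)^k : ℝ) ≤ ‖v y‖ := by
        have := hy
        simp only [hS, mem_setOf_eq] at this
        calc ((2:ℝ≥0)^k : ℝ) ≤ (‖v y‖₊ : ℝ) := by exact_mod_cast this
          _ = ‖v y‖ := by simp
      have : (((2:ℝ≥0)^k / 2 : ℝ≥0) : ℝ) < ((2:ℝ≥0)^k : ℝ) := by exact_mod_cast h2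
      exact lt_of_lt_of_le this hy'
    refine (measure_mono hsub).trans (hW _ ?_)
    positivity
  set cW : ℝ≥0∞ := ∑' k : ℕ, (2:ℝ≥0∞)^(k+1) * ((W:ℝ≥0∞) / ((2:ℝ≥0)^k / 2 : ℝ≥0)) ^ 3 with hcWdef
  have hterm : ∀ k : ℕ, (2:ℝ≥0∞)^(k+1) * ((W:ℝ≥0∞) / ((2:ℝ≥0)^k / 2 : ℝ≥0)) ^ 3
      = (((2:ℝ≥0)^(k+1) * (W / ((2:ℝ≥0)^k / 2))^3 : ℝ≥0) : ℝ≥0∞) := by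
    intro k
    rw [← ENNReal.coe_div (by positivity)]
    push_cast
    ring
  have htermval : ∀ k : ℕ, ((2:ℝ≥0)^(k+1) * (W / ((2:ℝ≥0)^k / 2))^3 : ℝ≥0)
      = (16 * W^3) * (4⁻¹ : ℝ≥0)^k := by
    intro k
    have h2k : ((2:ℝ)^k) ≠ 0 := by positivity
    apply NNReal.coe_injective
    push_cast
    have e1 : (4:ℝ)^k = ((2:ℝ)^k)^2 := by
      rw [show (4:ℝ) = 2^2 by norm_num, ← pow_mul, ← pow_mul, mul_comm]
    rw [inv_pow, e1]
    field_simp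
    ring
  have hcWfin : cW ≠ ⊤ := by
    rw [hcWdef]
    have : ∀ k:ℕ, (2:ℝ≥0∞)^(k+1) * ((W:ℝ≥0∞) / ((2:ℝ≥0)^k / 2 : ℝ≥0)) ^ 3
        = (((16 * W^3) * (4⁻¹ : ℝ≥0)^k : ℝ≥0) : ℝ≥0∞) := by
      intro k; rw [hterm k, htermval k]
    simp_rw [this]
    rw [ENNReal.tsum_coe_ne_top_iff_summable]
    exact (NNReal.summable_geometric (by rw [inv_lt_one_iff₀]; norm_num)).mul_left _
  refine ⟨cW, hcWfin, fun A => ?_⟩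
  have hpt : ∀ y : E3, (‖v y‖₊ : ℝ≥0∞)
      ≤ 1 + ∑' k : ℕ, (S k).indicator (fun _ => (2:ℝ≥0∞)^(k+1)) y := by
    intro y
    refine (dyadic_le ‖v y‖₊).trans ?_
    gcongr with k
    rw [Set.indicator_apply]
    simp only [hS, mem_setOf_eq]
    exact le_rfl
  calc (∫⁻ y in A, (‖v y‖₊ : ℝ≥0∞) ∂volume)
      ≤ ∫⁻ y in A, (1 + ∑' k : ℕ, (S k).indicator (fun _ => (2:ℝ≥0∞)^(k+1)) y) ∂volume :=
        lintegral_mono hpt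
    _ = (∫⁻ _ in A, (1:ℝ≥0∞) ∂volume)
        + ∫⁻ y in A, (∑' k : ℕ, (S k).indicator (fun _ => (2:ℝ≥0∞)^(k+1)) y) ∂volume :=
        lintegral_add_left measurable_const _
    _ ≤ volume A + cW := by
        gcongr
        · rw [setLIntegral_one]
        · rw [lintegral_tsum (fun k => (measurable_const.indicator (hSmeas k)).aemeasurable)]
          rw [hcWdef]
          refine ENNReal.tsum_le_tsum (fun k => ?_)
          rw [lintegral_indicator_const (hSmeas k)]
          refine le_trans ?_ (mul_le_mul_right (hSvol k) _)
          gcongr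
          exact Measure.restrict_le_self

end HeatRemark

set_option maxHeartbeats 1000000 in
/-- **Remark 2.5.**
For `0 < r < R`, `q ∈ (3,∞)`, `T > 0`, and `u₀ ∈ L^{3,∞}` with `u₀|_{B_R(x₀)} ∈ L^q`,
`ess sup_{x ∈ B_r(x₀)} |(e^{tΔ}u₀)(x)| ≤ C t^{-3/(2q)}` for all `t ∈ (0,T)`. -/
theorem heat_extension_local_Linfty_bound
    (x₀ : E3) (r R : ℝ) (hr : 0 < r) (hrR : r < R) (q : ℝ) (hq : 3 < q)
    (T : ℝ) (hT : 0 < T)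
    (u₀ : E3 → E3) (hu₀ : wL3 u₀ < ⊤)
    (hLq : eLpNorm u₀ (ENNReal.ofReal q) (volume.restrict (ball x₀ R)) < ⊤) :
    ∃ C > 0, ∀ t ∈ Ioo (0:ℝ) T,
      eLpNorm (heat t u₀) ⊤ (volume.restrict (ball x₀ r))
        ≤ ENNReal.ofReal (C * t ^ (-(3/(2*q)))) := by
  classical
  by_cases hmeas : AEStronglyMeasurable u₀ (volume : Measure E3)
  case neg =>
    refine ⟨1, one_pos, fun t _ => ?_⟩
    have hzero : heat t u₀ = fun _ => (0:E3) := by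
      funext x
      have hni : ¬ Integrable (fun y : E3 => Real.exp (-‖x - y‖^2 / (4*t)) • u₀ y) volume := by
        intro hI
        apply hmeas
        have heq : u₀ = fun y : E3 =>
            (Real.exp (-‖x - y‖^2 / (4*t)))⁻¹ • (Real.exp (-‖x - y‖^2 / (4*t)) • u₀ y) := by
          funext y
          rw [smul_smul, inv_mul_cancel₀ (Real.exp_ne_zero _), one_smul]
        rw [heq]
        have hc : Continuous fun y : E3 => (Real.exp (-‖x - y‖^2 / (4*t)))⁻¹ := by
          apply Continuous.inv₀
          · exact Real.continuous_exp.comp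
              (((continuous_const.sub continuous_id).norm.pow 2).neg.div_const _)
          · exact fun y => Real.exp_ne_zero _
        exact hc.aestronglyMeasurable.smul hI.1
      show ((4 * π * t) ^ (-(3 : ℝ)/2)) • (∫ y : E3, Real.exp (-‖x - y‖^2 / (4*t)) • u₀ y) = 0
      rw [integral_undef hni, smul_zero]
    rw [hzero, eLpNorm_zero']
    exact zero_le
  case pos =>
  have h1q : 1 < q := by linarith
  have hq0 : (0:ℝ) < q := by linarith
  set q' : ℝ := q / (q - 1) with hq'def
  have hconj : q'.HolderConjugate q := (Real.HolderConjugate.conjExponent h1q).symm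
  have hq'1 : 1 < q' := hconj.lt
  have hq'0 : 0 < q' := hconj.pos
  obtain ⟨v, hv_sm, huv⟩ : ∃ v, StronglyMeasurable v ∧ u₀ =ᵐ[(volume : Measure E3)] v :=
    ⟨hmeas.mk u₀, hmeas.stronglyMeasurable_mk, hmeas.ae_eq_mk⟩
  have hvm : Measurable v := hv_sm.measurable
  set W : ℝ≥0 := (wL3 u₀).toNNReal with hWdef
  have hWcoe : (W : ℝ≥0∞) = wL3 u₀ := ENNReal.coe_toNNReal hu₀.ne
  have hWl : ∀ l : ℝ≥0, l ≠ 0 → volume {x : E3 | (l:ℝ) < ‖v x‖} ≤ ((W:ℝ≥0∞)/l)^3 := by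
    intro l hl
    have hsets : {x : E3 | (l:ℝ) < ‖v x‖} =ᵐ[(volume : Measure E3)] {x : E3 | (l:ℝ) < ‖u₀ x‖} := by
      filter_upwards [huv] with x hx
      change ((l:ℝ) < ‖v x‖) = ((l:ℝ) < ‖u₀ x‖)
      rw [hx]
    rw [measure_congr hsets, hWcoe]
    exact HeatRemark.dist_bound u₀ l hl
  obtain ⟨cW, hcWfin, hL1⟩ := HeatRemark.local_L1 hvm hWl
  -- the Lq quantity
  have hqne0 : ENNReal.ofReal q ≠ 0 := by
    simp only [ne_eq, ENNReal.ofReal_eq_zero, not_le]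
    exact hq0
  set Anorm : ℝ≥0∞ := (∫⁻ y in ball x₀ R, (‖v y‖₊ : ℝ≥0∞)^q ∂volume)^(1/q) with hAn
  have hAnormEq : eLpNorm u₀ (ENNReal.ofReal q) (volume.restrict (ball x₀ R)) = Anorm := by
    rw [eLpNorm_eq_lintegral_rpow_enorm_toReal hqne0 ENNReal.ofReal_ne_top, ENNReal.toReal_ofReal hq0.le,
      hAn]
    congr 1
    apply lintegral_congr_ae
    filter_upwards [ae_restrict_of_ae huv] with y hy
    rw [hy, enorm_eq_nnnorm]
  have hAfin : Anorm ≠ ⊤ := by rw [← hAnormEq]; exact hLq.ne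
  -- the far-field quantity
  set M : ℝ≥0∞ := ∫⁻ y in (ball x₀ R)ᶜ,
      ENNReal.ofReal (Real.exp (-(‖y - x₀‖ - r)^2 / (8*T))) * (‖v y‖₊ : ℝ≥0∞) ∂volume with hM
  have hMfin : M ≠ ⊤ := by
    set ρ : ℝ := Real.exp (-(1/(8*T))) with hρdef
    have hρpos : 0 < ρ := Real.exp_pos _
    have hρ1 : ρ < 1 := by
      have h8 : (0:ℝ) < 1/(8*T) := by positivity
      rw [hρdef]
      calc rexp (-(1/(8*T))) < rexp 0 := Real.exp_lt_exp.2 (by linarith)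
        _ = 1 := Real.exp_zero
    have hρn : ‖ρ‖ < 1 := by rwa [Real.norm_eq_abs, abs_of_pos hρpos]
    have hsum0 : Summable (fun n : ℕ => ((n:ℝ)+1)^3 * ρ^n) := by
      have h3 := summable_pow_mul_geometric_of_norm_lt_one 3 hρn
      have h2 := summable_pow_mul_geometric_of_norm_lt_one 2 hρn
      have h1 := summable_pow_mul_geometric_of_norm_lt_one 1 hρn
      have h0 := summable_pow_mul_geometric_of_norm_lt_one 0 hρn
      refine (h3.add ((h2.mul_left 3).add ((h1.mul_left 3).add h0))).congr (fun n => ?_)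
      push_cast
      ring
    have hsum : Summable (fun n : ℕ =>
        Real.exp (-((n:ℝ) + R - r)^2/(8*T)) * (R + (n:ℝ) + 1)^3) := by
      refine Summable.of_nonneg_of_le (fun n => mul_nonneg (Real.exp_pos _).le
        (pow_nonneg (by have := (Nat.cast_nonneg n : (0:ℝ) ≤ n); linarith) 3)) (fun n => ?_)
        (hsum0.mul_left ((R+2)^3))
      have e1 : Real.exp (-((n:ℝ) + R - r)^2/(8*T)) ≤ ρ^n := by
        rw [hρdef, ← Real.exp_nat_mul]
        apply Real.exp_le_exp.2
        have hn2 : (n:ℝ) ≤ ((n:ℝ) + R - r)^2 := by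
          rcases Nat.eq_zero_or_pos n with h|h
          · simp only [h, Nat.cast_zero]
            positivity
          · have h1n : (1:ℝ) ≤ n := by exact_mod_cast h
            nlinarith
        have h8T : (0:ℝ) < 8*T := by positivity
        have := mul_le_mul_of_nonneg_right (neg_le_neg hn2) (inv_nonneg.2 h8T.le)
        calc (n:ℝ) * -(1/(8*T)) = -(n:ℝ) * (8*T)⁻¹ := by ring
          _ ≥ -((n:ℝ) + R - r)^2 * (8*T)⁻¹ := this
          _ = -((n:ℝ) + R - r)^2 / (8*T) := by ring
      have e2 : (R + (n:ℝ) + 1)^3 ≤ (R+2)^3 * ((n:ℝ)+1)^3 := by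
        rw [← mul_pow]
        have hn0 : (0:ℝ) ≤ n := Nat.cast_nonneg n
        apply pow_le_pow_left₀ (by linarith)
        nlinarith
      calc Real.exp (-((n:ℝ) + R - r)^2/(8*T)) * (R + (n:ℝ) + 1)^3
          ≤ ρ^n * ((R+2)^3 * ((n:ℝ)+1)^3) := by
            apply mul_le_mul e1 e2 (pow_nonneg (by
              have := (Nat.cast_nonneg n : (0:ℝ) ≤ n); linarith) 3) (by positivity)
        _ = (R+2)^3 * (((n:ℝ)+1)^3 * ρ^n) := by ring
    have hKc : volume (ball (0:E3) 1) + cW ≠ ⊤ :=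
      ENNReal.add_ne_top.2 ⟨measure_ball_lt_top.ne, hcWfin⟩
    set Kc : ℝ≥0∞ := volume (ball (0:E3) 1) + cW with hKcdef
    have hcover : (ball x₀ R)ᶜ ⊆ ⋃ n : ℕ, (ball x₀ (R + n + 1) \ ball x₀ (R + n)) := by
      intro y hy
      rw [mem_compl_iff, mem_ball, not_lt] at hy
      refine mem_iUnion.2 ⟨⌊dist y x₀ - R⌋₊, ?_, ?_⟩
      · rw [mem_ball]
        have := Nat.lt_floor_add_one (dist y x₀ - R)
        linarith
      · rw [mem_ball, not_lt]
        have := Nat.floor_le (sub_nonneg.2 hy)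
        linarith
    have step2 : ∀ n:ℕ, (∫⁻ y in (ball x₀ (R + n + 1) \ ball x₀ (R + n)),
        ENNReal.ofReal (Real.exp (-(‖y - x₀‖ - r)^2 / (8*T))) * (‖v y‖₊ : ℝ≥0∞) ∂volume)
        ≤ ENNReal.ofReal (Real.exp (-((n:ℝ)+R-r)^2/(8*T)) * (R+(n:ℝ)+1)^3) * Kc := by
      intro n
      have hDm : MeasurableSet (ball x₀ (R + n + 1) \ ball x₀ (R + n)) :=
        measurableSet_ball.diff measurableSet_ball
      have hmono : ∀ y ∈ (ball x₀ (R + n + 1) \ ball x₀ (R + n)),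
          ENNReal.ofReal (Real.exp (-(‖y - x₀‖ - r)^2 / (8*T))) * (‖v y‖₊ : ℝ≥0∞)
          ≤ ENNReal.ofReal (Real.exp (-((n:ℝ)+R-r)^2/(8*T))) * (‖v y‖₊ : ℝ≥0∞) := by
        intro y hy
        have h1 : R + n ≤ ‖y - x₀‖ := by
          have := hy.2
          rw [mem_ball, not_lt, dist_eq_norm] at this
          exact this
        refine mul_le_mul_left (ENNReal.ofReal_le_ofReal (Real.exp_le_exp.2 ?_)) _
        have hd0 : (0:ℝ) ≤ (n:ℝ) + R - r := by
          have : (0:ℝ) ≤ n := Nat.cast_nonneg n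
          linarith
        have hsq : ((n:ℝ)+R-r)^2 ≤ (‖y - x₀‖ - r)^2 := by
          apply pow_le_pow_left₀ hd0
          linarith
        have h8T : (0:ℝ) < 8*T := by positivity
        have := mul_le_mul_of_nonneg_right (neg_le_neg hsq) (inv_nonneg.2 h8T.le)
        calc -(‖y - x₀‖ - r)^2 / (8*T) = -(‖y - x₀‖ - r)^2 * (8*T)⁻¹ := by ring
          _ ≤ -((n:ℝ)+R-r)^2 * (8*T)⁻¹ := this
          _ = -((n:ℝ)+R-r)^2 / (8*T) := by ring
      have hone : (1:ℝ≥0∞) ≤ ENNReal.ofReal ((R+(n:ℝ)+1)^3) := by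
        rw [show (1:ℝ≥0∞) = ENNReal.ofReal 1 by simp]
        apply ENNReal.ofReal_le_ofReal
        have : (0:ℝ) ≤ n := Nat.cast_nonneg n
        have h1 : (1:ℝ) ≤ R + (n:ℝ) + 1 := by linarith
        calc (1:ℝ) = 1^3 := by norm_num
          _ ≤ (R+(n:ℝ)+1)^3 := pow_le_pow_left₀ (by norm_num) h1 3
      calc (∫⁻ y in (ball x₀ (R + n + 1) \ ball x₀ (R + n)),
            ENNReal.ofReal (Real.exp (-(‖y - x₀‖ - r)^2 / (8*T))) * (‖v y‖₊ : ℝ≥0∞) ∂volume)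
          ≤ ∫⁻ y in (ball x₀ (R + n + 1) \ ball x₀ (R + n)),
            ENNReal.ofReal (Real.exp (-((n:ℝ)+R-r)^2/(8*T))) * (‖v y‖₊ : ℝ≥0∞) ∂volume :=
            setLIntegral_mono' hDm hmono
        _ = ENNReal.ofReal (Real.exp (-((n:ℝ)+R-r)^2/(8*T)))
            * ∫⁻ y in (ball x₀ (R + n + 1) \ ball x₀ (R + n)), (‖v y‖₊ : ℝ≥0∞) ∂volume :=
            lintegral_const_mul' _ _ ENNReal.ofReal_ne_top
        _ ≤ ENNReal.ofReal (Real.exp (-((n:ℝ)+R-r)^2/(8*T)))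
            * (volume (ball x₀ (R+(n:ℝ)+1)) + cW) := by
            gcongr
            refine le_trans (lintegral_mono_set ?_) (hL1 (ball x₀ (R+(n:ℝ)+1)))
            refine diff_subset.trans ?_
            apply ball_subset_ball
            push_cast
            linarith
        _ ≤ ENNReal.ofReal (Real.exp (-((n:ℝ)+R-r)^2/(8*T)))
            * (ENNReal.ofReal ((R+(n:ℝ)+1)^3) * Kc) := by
            refine mul_le_mul_right ?_ _
            have hRn1 : (0:ℝ) ≤ R+(n:ℝ)+1 := by
              have := (Nat.cast_nonneg n : (0:ℝ) ≤ n); linarith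
            have hfr : (Module.finrank ℝ E3) = 3 := finrank_euclideanSpace_fin
            rw [Measure.addHaar_ball volume x₀ hRn1, hfr, hKcdef, mul_add]
            exact add_le_add le_rfl (le_mul_of_one_le_left zero_le hone)
        _ = ENNReal.ofReal (Real.exp (-((n:ℝ)+R-r)^2/(8*T)) * (R+(n:ℝ)+1)^3) * Kc := by
            rw [ENNReal.ofReal_mul (Real.exp_pos _).le, mul_assoc]
    have : M ≤ ∑' n : ℕ, ENNReal.ofReal
        (Real.exp (-((n:ℝ)+R-r)^2/(8*T)) * (R+(n:ℝ)+1)^3) * Kc := by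
      rw [hM]
      refine le_trans (lintegral_mono_set hcover) ?_
      refine le_trans (lintegral_iUnion_le _ _) (ENNReal.tsum_le_tsum step2)
    rw [ENNReal.tsum_mul_right,
      ← ENNReal.ofReal_tsum_of_nonneg (fun n => mul_nonneg (Real.exp_pos _).le
        (pow_nonneg (by have := (Nat.cast_nonneg n : (0:ℝ) ≤ n); linarith) 3)) hsum] at this
    exact (this.trans_lt (ENNReal.mul_lt_top ENNReal.ofReal_lt_top hKc.lt_top)).ne
  -- pointwise key estimate
  have key : ∀ t ∈ Ioo (0:ℝ) T, ∀ x ∈ ball x₀ r, (‖heat t u₀ x‖₊ : ℝ≥0∞) ≤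
      ENNReal.ofReal ((4*π*t) ^ (-(3:ℝ)/2)) *
        (ENNReal.ofReal (((4*π*t/q') ^ ((3:ℝ)/2)) ^ (1/q')) * Anorm
          + ENNReal.ofReal (Real.exp (-(R-r)^2 / (8*t))) * M) := by
    rintro t ⟨ht0, htT⟩ x hx
    rw [mem_ball, dist_eq_norm] at hx
    have hpre : (0:ℝ) < (4*π*t) ^ (-(3:ℝ)/2) := Real.rpow_pos_of_pos (by positivity) _
    have hA : (‖heat t u₀ x‖₊ : ℝ≥0∞) = ENNReal.ofReal ((4*π*t) ^ (-(3:ℝ)/2)) *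
        (‖∫ y : E3, Real.exp (-‖x - y‖^2 / (4*t)) • u₀ y‖₊ : ℝ≥0∞) := by
      unfold heat
      rw [nnnorm_smul, ENNReal.coe_mul, ← enorm_eq_nnnorm, Real.enorm_eq_ofReal hpre.le]
    rw [hA]
    refine mul_le_mul_right ?_ _
    refine le_trans (enorm_integral_le_lintegral_enorm _) ?_
    have hB : (∫⁻ y, (‖Real.exp (-‖x - y‖^2 / (4*t)) • u₀ y‖₊ : ℝ≥0∞) ∂volume)
        = ∫⁻ y, ENNReal.ofReal (Real.exp (-‖x - y‖^2 / (4*t))) * (‖v y‖₊ : ℝ≥0∞) ∂volume := by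
      apply lintegral_congr_ae
      filter_upwards [huv] with y hy
      rw [nnnorm_smul, ENNReal.coe_mul, ← enorm_eq_nnnorm, Real.enorm_eq_ofReal (Real.exp_pos _).le, hy]
    simp only [enorm_eq_nnnorm]
    rw [hB, ← lintegral_add_compl
      (fun y => ENNReal.ofReal (Real.exp (-‖x - y‖^2 / (4*t))) * (‖v y‖₊ : ℝ≥0∞))
      (measurableSet_ball (x := x₀) (ε := R))]
    have hnear : (∫⁻ y in ball x₀ R,
        ENNReal.ofReal (Real.exp (-‖x - y‖^2/(4*t))) * (‖v y‖₊:ℝ≥0∞) ∂volume)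
        ≤ ENNReal.ofReal (((4*π*t/q')^((3:ℝ)/2))^(1/q')) * Anorm := by
      have hKmeas : Measurable fun y : E3 => ENNReal.ofReal (Real.exp (-‖x - y‖^2/(4*t))) :=
        ENNReal.measurable_ofReal.comp (Real.continuous_exp.comp
          (((continuous_const.sub continuous_id).norm.pow 2).neg.div_const _)).measurable
      have hHold := ENNReal.lintegral_mul_le_Lp_mul_Lq (volume.restrict (ball x₀ R)) hconj
        hKmeas.aemeasurable (hvm.nnnorm.coe_nnreal_ennreal.aemeasurable)
      simp only [Pi.mul_apply] at hHold
      refine hHold.trans ?_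
      rw [hAn]
      refine mul_le_mul_left ?_ _
      have hb : (0:ℝ) < q'/(4*t) := by positivity
      have hgauss : (∫⁻ y in ball x₀ R,
          (ENNReal.ofReal (Real.exp (-‖x - y‖^2/(4*t))))^q' ∂volume)
          ≤ ENNReal.ofReal ((4*π*t/q')^((3:ℝ)/2)) := by
        refine le_trans (setLIntegral_le_lintegral _ _) ?_
        have hpt : (fun y : E3 => (ENNReal.ofReal (Real.exp (-‖x - y‖^2/(4*t))))^q')
            = fun y : E3 => ENNReal.ofReal (Real.exp (-(q'/(4*t)) * ‖x - y‖^2)) := by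
          funext y
          rw [ENNReal.ofReal_rpow_of_pos (Real.exp_pos _)]
          congr 1
          rw [← Real.exp_mul]
          congr 1
          field_simp
        rw [hpt]
        have hIG : Integrable (fun z : E3 => Real.exp (-(q'/(4*t)) * ‖z‖^2)) volume := by
          have hc := GaussianFourier.integrable_cexp_neg_mul_sq_norm_add
            (V := E3) (b := ((q'/(4*t) : ℝ) : ℂ))
            (by rw [Complex.ofReal_re]; exact hb) 0 0
          refine hc.re.congr (ae_of_all _ fun z => ?_)
          simp only [zero_mul, add_zero]
          rw [show (-((q'/(4*t):ℝ):ℂ) * (‖z‖:ℂ)^2) = (((-(q'/(4*t)) * ‖z‖^2 : ℝ)):ℂ) by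
            push_cast; ring]
          exact Complex.exp_ofReal_re _
        have hIG2 : Integrable (fun y : E3 => Real.exp (-(q'/(4*t)) * ‖x - y‖^2)) volume := by
          have := (Measure.measurePreserving_sub_left (volume : Measure E3) x).integrable_comp
            hIG.aestronglyMeasurable
          exact this.2 hIG
        rw [← ofReal_integral_eq_lintegral_ofReal hIG2 (ae_of_all _ fun y => (Real.exp_pos _).le)]
        apply ENNReal.ofReal_le_ofReal
        rw [integral_sub_left_eq_self (fun z : E3 => Real.exp (-(q'/(4*t)) * ‖z‖^2)) volume x]
        rw [GaussianFourier.integral_rexp_neg_mul_sq_norm hb]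
        apply le_of_eq
        rw [show π / (q'/(4*t)) = 4*π*t/q' by field_simp, finrank_euclideanSpace_fin]
        norm_num
      calc (∫⁻ y in ball x₀ R,
            (ENNReal.ofReal (Real.exp (-‖x - y‖^2/(4*t))))^q' ∂volume)^(1/q')
          ≤ (ENNReal.ofReal ((4*π*t/q')^((3:ℝ)/2)))^(1/q') :=
            ENNReal.rpow_le_rpow hgauss (by positivity)
        _ = ENNReal.ofReal (((4*π*t/q')^((3:ℝ)/2))^(1/q')) :=
            ENNReal.ofReal_rpow_of_pos (Real.rpow_pos_of_pos (by positivity) _)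
    have hfar : (∫⁻ y in (ball x₀ R)ᶜ,
        ENNReal.ofReal (Real.exp (-‖x - y‖^2/(4*t))) * (‖v y‖₊:ℝ≥0∞) ∂volume)
        ≤ ENNReal.ofReal (Real.exp (-(R-r)^2/(8*t))) * M := by
      rw [hM, ← lintegral_const_mul' _ _ ENNReal.ofReal_ne_top]
      refine setLIntegral_mono' measurableSet_ball.compl (fun y hy => ?_)
      rw [← mul_assoc, ← ENNReal.ofReal_mul (Real.exp_pos _).le, ← Real.exp_add]
      refine mul_le_mul_left (ENNReal.ofReal_le_ofReal (Real.exp_le_exp.2 ?_)) _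
      have hy' : R ≤ ‖y - x₀‖ := by
        rw [mem_compl_iff, mem_ball, not_lt, dist_eq_norm] at hy
        exact hy
      have htri : ‖y - x₀‖ - r ≤ ‖x - y‖ := by
        have h1 : ‖y - x₀‖ ≤ ‖y - x‖ + ‖x - x₀‖ := by
          calc ‖y - x₀‖ = ‖(y - x) + (x - x₀)‖ := by congr 1; abel
            _ ≤ ‖y - x‖ + ‖x - x₀‖ := norm_add_le _ _
        rw [norm_sub_rev y x] at h1
        linarith
      have h0 : (0:ℝ) ≤ ‖y - x₀‖ - r := by linarith
      have hsq1 : (R - r)^2 ≤ ‖x - y‖^2 := pow_le_pow_left₀ (by linarith) (by linarith) 2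
      have hsq2 : (‖y - x₀‖ - r)^2 ≤ ‖x - y‖^2 := pow_le_pow_left₀ h0 htri 2
      have i1 : (R-r)^2/(8*t) ≤ ‖x - y‖^2/(8*t) := by gcongr
      have i2 : (‖y - x₀‖-r)^2/(8*T) ≤ ‖x - y‖^2/(8*t) :=
        div_le_div₀ (by positivity) hsq2 (by positivity) (by linarith)
      have hhalf : ‖x - y‖^2/(8*t) + ‖x - y‖^2/(8*t) = ‖x - y‖^2/(4*t) := by ring
      have e0 : -‖x - y‖^2/(4*t) = -(‖x - y‖^2/(4*t)) := by ring
      have e1 : -(R-r)^2/(8*t) = -((R-r)^2/(8*t)) := by ring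
      have e2 : -(‖y - x₀‖-r)^2/(8*T) = -((‖y - x₀‖-r)^2/(8*T)) := by ring
      rw [e0, e1, e2]
      linarith
    exact add_le_add hnear hfar
  -- final assembly
  set Arr : ℝ := Anorm.toReal with hArr
  set Mr : ℝ := M.toReal with hMrdef
  have hAr : Anorm = ENNReal.ofReal Arr := (ENNReal.ofReal_toReal hAfin).symm
  have hMr : M = ENNReal.ofReal Mr := (ENNReal.ofReal_toReal hMfin).symm
  set C₁ : ℝ := (4*π)^(-(3:ℝ)/2) * ((4*π/q')^((3:ℝ)/2))^(1/q') * Arr with hC₁def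
  set C₂ : ℝ := (4*π)^(-(3:ℝ)/2) * (4/((R-r)^2/8)^2) * T^((1:ℝ)/2) * T^(3/(2*q)) * Mr with hC₂def
  have hC₁0 : 0 ≤ C₁ := by rw [hC₁def]; positivity
  have hC₂0 : 0 ≤ C₂ := by rw [hC₂def]; positivity
  refine ⟨C₁ + C₂ + 1, by linarith, fun t ht => ?_⟩
  rw [eLpNorm_exponent_top, eLpNormEssSup]
  refine essSup_le_of_ae_le _ ?_
  refine (ae_restrict_iff' measurableSet_ball).2 (ae_of_all _ fun x hx => ?_)
  refine (key t ht x hx).trans ?_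
  obtain ⟨ht0, htT⟩ := ht
  rw [hAr, hMr]
  have hArr0 : (0:ℝ) ≤ Arr := ENNReal.toReal_nonneg
  have hMr0 : (0:ℝ) ≤ Mr := ENNReal.toReal_nonneg
  have hg0 : (0:ℝ) ≤ ((4*π*t/q')^((3:ℝ)/2))^(1/q') := by positivity
  have he0 : (0:ℝ) ≤ Real.exp (-(R-r)^2/(8*t)) := (Real.exp_pos _).le
  have hc00 : (0:ℝ) ≤ (4*π*t)^(-(3:ℝ)/2) := by positivity
  have emerge : ENNReal.ofReal ((4*π*t) ^ (-(3:ℝ)/2)) *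
        (ENNReal.ofReal (((4*π*t/q') ^ ((3:ℝ)/2)) ^ (1/q')) * ENNReal.ofReal Arr
          + ENNReal.ofReal (Real.exp (-(R-r)^2 / (8*t))) * ENNReal.ofReal Mr)
      = ENNReal.ofReal ((4*π*t) ^ (-(3:ℝ)/2) *
          ((((4*π*t/q') ^ ((3:ℝ)/2)) ^ (1/q')) * Arr
            + Real.exp (-(R-r)^2 / (8*t)) * Mr)) := by
    rw [← ENNReal.ofReal_mul hg0, ← ENNReal.ofReal_mul he0,
      ← ENNReal.ofReal_add (mul_nonneg hg0 hArr0) (mul_nonneg he0 hMr0),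
      ← ENNReal.ofReal_mul hc00]
  rw [emerge]
  apply ENNReal.ofReal_le_ofReal
  -- now a purely real estimate
  have hsplit : (4*π*t)^(-(3:ℝ)/2) = (4*π)^(-(3:ℝ)/2) * t^(-(3:ℝ)/2) := by
    rw [show (4:ℝ)*π*t = (4*π)*t by ring, Real.mul_rpow (by positivity) ht0.le]
  have hrpow_pos : (0:ℝ) < t^(-(3/(2*q))) := Real.rpow_pos_of_pos ht0 _
  have h1 : (4*π*t)^(-(3:ℝ)/2) * (((4*π*t/q')^((3:ℝ)/2))^(1/q') * Arr)
      ≤ C₁ * t^(-(3/(2*q))) := by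
    have hg : ((4*π*t/q')^((3:ℝ)/2))^(1/q')
        = ((4*π/q')^((3:ℝ)/2))^(1/q') * t^((3:ℝ)/2 * (1/q')) := by
      rw [show (4:ℝ)*π*t/q' = (4*π/q')*t by ring,
        Real.mul_rpow (by positivity) ht0.le,
        Real.mul_rpow (by positivity) (by positivity),
        ← Real.rpow_mul ht0.le]
    have hexp : t^(-(3:ℝ)/2) * t^((3:ℝ)/2 * (1/q')) = t^(-(3/(2*q))) := by
      rw [← Real.rpow_add ht0]
      congr 1
      have hq1 : q - 1 ≠ 0 := ne_of_gt (by linarith)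
      rw [hq'def]
      field_simp
      ring
    rw [hsplit, hg]
    apply le_of_eq
    calc (4*π)^(-(3:ℝ)/2) * t^(-(3:ℝ)/2)
          * (((4*π/q')^((3:ℝ)/2))^(1/q') * t^((3:ℝ)/2 * (1/q')) * Arr)
        = C₁ * (t^(-(3:ℝ)/2) * t^((3:ℝ)/2 * (1/q'))) := by rw [hC₁def]; ring
      _ = C₁ * t^(-(3/(2*q))) := by rw [hexp]
  have h2 : (4*π*t)^(-(3:ℝ)/2) * (Real.exp (-(R-r)^2/(8*t)) * Mr)
      ≤ C₂ * t^(-(3/(2*q))) := by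
    set a : ℝ := (R-r)^2/8 with hadef
    have ha0 : 0 < a := by rw [hadef]; have : 0 < R - r := by linarith
                           positivity
    have hMr0 : 0 ≤ Mr := ENNReal.toReal_nonneg
    have hexpb : Real.exp (-(R-r)^2/(8*t)) ≤ 4*t^2/a^2 := by
      have hearg : -(R-r)^2/(8*t) = -(a/t) := by
        rw [hadef]; field_simp
      rw [hearg, Real.exp_neg]
      have h1' : a/(2*t) ≤ Real.exp (a/(2*t)) := by
        have := Real.add_one_le_exp (a/(2*t))
        linarith
      have h2' : (a/(2*t))^2 ≤ Real.exp (a/t) := by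
        have hh := pow_le_pow_left₀ (by positivity) h1' 2
        rw [sq (Real.exp (a/(2*t))), ← Real.exp_add] at hh
        rw [show a/(2*t) + a/(2*t) = a/t by field_simp; ring] at hh
        exact hh
      calc (Real.exp (a/t))⁻¹ ≤ ((a/(2*t))^2)⁻¹ := by
            apply inv_anti₀ (by positivity) h2'
        _ = 4*t^2/a^2 := by field_simp; ring
    have ht2 : t^(-(3:ℝ)/2) * t^2 = t^((1:ℝ)/2) := by
      rw [show (t:ℝ)^2 = t^((2:ℕ):ℝ) by rw [Real.rpow_natCast], ← Real.rpow_add ht0]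
      norm_num
    have hT12 : t^((1:ℝ)/2) ≤ T^((1:ℝ)/2) := Real.rpow_le_rpow ht0.le htT.le (by norm_num)
    have htT3 : T^(-(3/(2*q))) ≤ t^(-(3/(2*q))) := by
      rw [Real.rpow_neg ht0.le, Real.rpow_neg hT.le]
      exact inv_anti₀ (Real.rpow_pos_of_pos ht0 _)
        (Real.rpow_le_rpow ht0.le htT.le (by positivity))
    have hTT : T^(3/(2*q)) * T^(-(3/(2*q))) = 1 := by
      rw [← Real.rpow_add hT]
      norm_num
    have hbase : (4*π*t)^(-(3:ℝ)/2) * (Real.exp (-(R-r)^2/(8*t)) * Mr)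
        ≤ (4*π)^(-(3:ℝ)/2) * (4/a^2) * T^((1:ℝ)/2) * Mr := by
      rw [hsplit]
      calc (4*π)^(-(3:ℝ)/2) * t^(-(3:ℝ)/2) * (Real.exp (-(R-r)^2/(8*t)) * Mr)
          ≤ (4*π)^(-(3:ℝ)/2) * t^(-(3:ℝ)/2) * ((4*t^2/a^2) * Mr) := by
            apply mul_le_mul_of_nonneg_left
              (mul_le_mul_of_nonneg_right hexpb hMr0) (by positivity)
        _ = (4*π)^(-(3:ℝ)/2) * (4/a^2) * (t^(-(3:ℝ)/2) * t^2) * Mr := by ring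
        _ = (4*π)^(-(3:ℝ)/2) * (4/a^2) * t^((1:ℝ)/2) * Mr := by rw [ht2]
        _ ≤ (4*π)^(-(3:ℝ)/2) * (4/a^2) * T^((1:ℝ)/2) * Mr := by
            apply mul_le_mul_of_nonneg_right
              (mul_le_mul_of_nonneg_left hT12 (by positivity)) hMr0
    calc (4*π*t)^(-(3:ℝ)/2) * (Real.exp (-(R-r)^2/(8*t)) * Mr)
        ≤ (4*π)^(-(3:ℝ)/2) * (4/a^2) * T^((1:ℝ)/2) * Mr := hbase
      _ = C₂ * T^(-(3/(2*q))) := by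
          have hC2eq : C₂ = (4*π)^(-(3:ℝ)/2) * (4/a^2) * T^((1:ℝ)/2) * Mr * T^(3/(2*q)) := by
            rw [hC₂def, hadef]
            ring
          rw [hC2eq, mul_assoc _ (T^(3/(2*q))) (T^(-(3/(2*q)))), hTT, mul_one]
      _ ≤ C₂ * t^(-(3/(2*q))) := mul_le_mul_of_nonneg_left htT3 hC₂0
  calc (4*π*t)^(-(3:ℝ)/2)
      * (((4*π*t/q')^((3:ℝ)/2))^(1/q') * Arr + Real.exp (-(R-r)^2/(8*t)) * Mr)
      = (4*π*t)^(-(3:ℝ)/2) * (((4*π*t/q')^((3:ℝ)/2))^(1/q') * Arr)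
        + (4*π*t)^(-(3:ℝ)/2) * (Real.exp (-(R-r)^2/(8*t)) * Mr) := by ring
    _ ≤ (C₁ + C₂ + 1) * t^(-(3/(2*q))) := by
        have hexpand : (C₁+C₂+1) * t^(-(3/(2*q)))
            = C₁ * t^(-(3/(2*q))) + C₂ * t^(-(3/(2*q))) + t^(-(3/(2*q))) := by ring
        rw [hexpand]
        linarith
end
end

section
/- (Far-field Gaussian tail estimate against weak-L³ data; the estimate (A1)–(A2) / I₃₂ in the paper.) Let x₀ ∈ ℝ³, 0 < r < R < ∞, and T > 0. Then there is a constant C = C(R,r,T) such that for every u₀ ∈ L^{3,∞}(ℝ³;ℝ³), every x ∈ B_r(x₀), and every t ∈ (0,T], ∫_{{y : ‖y−x₀‖ ≥ R}} t^{−3/2} e^{−‖x−y‖²/(4t)} |u₀(y)| dy ≤ C ‖u₀‖_{L^{3,∞}} t^{−3/2} e^{−(R−r)²/(4t)}. -/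
open MeasureTheory Real Set Metric
open scoped ENNReal NNReal

noncomputable section

/-- Distribution function bound from the weak-L³ quasinorm. -/
lemma wL3_dist_bound {F : Type*} [NormedAddCommGroup F] (f : E3 → F)
    (hW : wL3 f ≠ ⊤) {c : ℝ} (hc : 0 < c) :
    volume {x : E3 | c < ‖f x‖} ≤ ENNReal.ofReal (((wL3 f).toReal / c) ^ 3) := by
  set M := (wL3 f).toReal with hMdef
  set v := volume {x : E3 | c < ‖f x‖} with hv
  have h1 : ENNReal.ofReal c * v ^ ((3:ℝ)⁻¹) ≤ wL3 f := by
    have h := le_iSup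
      (fun l : ℝ≥0 => (l : ℝ≥0∞) * (volume {x : E3 | (l : ℝ) < ‖f x‖}) ^ ((3 : ℝ)⁻¹))
      c.toNNReal
    have hcc : ((c.toNNReal : ℝ)) = c := Real.coe_toNNReal c hc.le
    rw [hcc] at h
    exact h
  have h2 : v ^ ((3:ℝ)⁻¹) ≤ ENNReal.ofReal (M / c) := by
    rw [ENNReal.ofReal_div_of_pos hc, ENNReal.le_div_iff_mul_le
      (Or.inl (by simp [ENNReal.ofReal_eq_zero]; linarith)) (Or.inl ENNReal.ofReal_ne_top)]
    rw [mul_comm]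
    calc ENNReal.ofReal c * v ^ ((3:ℝ)⁻¹) ≤ wL3 f := h1
      _ = ENNReal.ofReal M := (ENNReal.ofReal_toReal hW).symm
  calc v = (v ^ ((3:ℝ)⁻¹)) ^ (3:ℝ) := by
        rw [← ENNReal.rpow_mul, inv_mul_cancel₀ (by norm_num : (3:ℝ) ≠ 0), ENNReal.rpow_one]
    _ ≤ (ENNReal.ofReal (M / c)) ^ (3:ℝ) := ENNReal.rpow_le_rpow h2 (by norm_num)
    _ = ENNReal.ofReal ((M / c) ^ (3:ℝ)) :=
        ENNReal.ofReal_rpow_of_nonneg (div_nonneg ENNReal.toReal_nonneg hc.le) (by norm_num)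
    _ = ENNReal.ofReal ((M / c) ^ 3) := by
        rw [show ((3:ℝ)) = ((3:ℕ):ℝ) by norm_num, Real.rpow_natCast]

/-- Core bound: integral of a weak-L³ function over a set. -/
lemma wL3_setLIntegral_bound (u₀ : E3 → E3) (hW : wL3 u₀ ≠ ⊤) (A : Set E3)
    {l : ℝ} (hl : 0 < l) :
    ∫⁻ y in A, ENNReal.ofReal ‖u₀ y‖ ≤ ENNReal.ofReal l * volume A
      + ENNReal.ofReal (8/3 * (wL3 u₀).toReal ^ 3 / l ^ 2) := by
  classical
  set M := (wL3 u₀).toReal with hMdef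
  have hM0 : 0 ≤ M := ENNReal.toReal_nonneg
  set S : ℕ → Set E3 := fun j => toMeasurable volume {y : E3 | l * 2 ^ j < ‖u₀ y‖} with hSdef
  have hSmeas : ∀ j, MeasurableSet (S j) := fun j => measurableSet_toMeasurable _ _
  have hpt : ∀ y, ENNReal.ofReal ‖u₀ y‖ ≤ ENNReal.ofReal l
      + ∑' j : ℕ, (S j).indicator (fun _ => ENNReal.ofReal (l * 2 ^ (j+1))) y := by
    intro y
    by_cases h : ‖u₀ y‖ ≤ l
    · exact le_trans (ENNReal.ofReal_le_ofReal h) le_self_add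
    · push_neg at h
      have hex : ∃ n, ‖u₀ y‖ ≤ l * 2 ^ n := by
        obtain ⟨n, hn⟩ := pow_unbounded_of_one_lt (‖u₀ y‖ / l) (by norm_num : (1:ℝ) < 2)
        refine ⟨n, ?_⟩
        rw [div_lt_iff₀ hl] at hn
        nlinarith
      set n₀ := Nat.find hex with hn₀
      have hspec : ‖u₀ y‖ ≤ l * 2 ^ n₀ := Nat.find_spec hex
      have hn₀pos : n₀ ≠ 0 := by
        intro h0
        rw [h0] at hspec
        simp at hspec
        linarith
      obtain ⟨j, hj⟩ : ∃ j, n₀ = j + 1 :=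
        ⟨n₀ - 1, (Nat.succ_pred_eq_of_pos (Nat.pos_of_ne_zero hn₀pos)).symm⟩
      have hmin : l * 2 ^ j < ‖u₀ y‖ := by
        have := Nat.find_min hex (show j < n₀ by omega)
        push_neg at this
        exact this
      have hyS : y ∈ S j := subset_toMeasurable _ _ hmin
      calc ENNReal.ofReal ‖u₀ y‖ ≤ ENNReal.ofReal (l * 2 ^ (j+1)) :=
            ENNReal.ofReal_le_ofReal (by rw [← hj]; exact hspec)
        _ = (S j).indicator (fun _ => ENNReal.ofReal (l * 2 ^ (j+1))) y := by
            rw [Set.indicator_of_mem hyS]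
        _ ≤ ∑' i : ℕ, (S i).indicator (fun _ => ENNReal.ofReal (l * 2 ^ (i+1))) y :=
            ENNReal.le_tsum j
        _ ≤ _ := le_add_self
  have hstep : ∫⁻ y in A, ENNReal.ofReal ‖u₀ y‖
      ≤ ENNReal.ofReal l * volume A
        + ∑' j : ℕ, ENNReal.ofReal (l * 2 ^ (j+1)) * volume {y : E3 | l * 2 ^ j < ‖u₀ y‖} := by
    calc ∫⁻ y in A, ENNReal.ofReal ‖u₀ y‖
        ≤ ∫⁻ y in A, (ENNReal.ofReal l
            + ∑' j : ℕ, (S j).indicator (fun _ => ENNReal.ofReal (l * 2 ^ (j+1))) y) :=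
          lintegral_mono hpt
      _ = ENNReal.ofReal l * volume A
          + ∑' j : ℕ, ENNReal.ofReal (l * 2 ^ (j+1)) * (volume.restrict A) (S j) := by
          rw [lintegral_add_left measurable_const, setLIntegral_const,
            lintegral_tsum (fun j => (measurable_const.indicator (hSmeas j)).aemeasurable)]
          congr 1
          exact tsum_congr fun j => lintegral_indicator_const (hSmeas j) _
      _ ≤ ENNReal.ofReal l * volume A
          + ∑' j : ℕ, ENNReal.ofReal (l * 2 ^ (j+1)) * volume {y : E3 | l * 2 ^ j < ‖u₀ y‖} := by
          refine add_le_add_right (ENNReal.tsum_le_tsum fun j => mul_le_mul_right ?_ _) _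
          calc (volume.restrict A) (S j) ≤ volume (S j) :=
                Measure.le_iff'.mp Measure.restrict_le_self _
            _ = volume {y : E3 | l * 2 ^ j < ‖u₀ y‖} := measure_toMeasurable _
  refine hstep.trans ?_
  gcongr
  calc ∑' j : ℕ, ENNReal.ofReal (l * 2 ^ (j+1)) * volume {y : E3 | l * 2 ^ j < ‖u₀ y‖}
      ≤ ∑' j : ℕ, ENNReal.ofReal (l * 2 ^ (j+1)) * ENNReal.ofReal ((M / (l * 2 ^ j)) ^ 3) := by
        gcongr with j
        exact wL3_dist_bound u₀ hW (by positivity)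
    _ = ∑' j : ℕ, ENNReal.ofReal ((8/3 * M ^ 3 / l ^ 2) * (3/4) * (1/4 : ℝ) ^ j) := by
        refine tsum_congr fun j => ?_
        rw [← ENNReal.ofReal_mul (by positivity)]
        congr 1
        have h2j : (2:ℝ) ^ j ≠ 0 := by positivity
        have h4 : (4:ℝ) ^ j = 2 ^ j * 2 ^ j := by
          rw [show (4:ℝ) = 2 * 2 by norm_num, mul_pow]
        field_simp
        rw [one_div_pow, h4, pow_succ]
        field_simp
        ring
    _ = ENNReal.ofReal (∑' j : ℕ, (8/3 * M ^ 3 / l ^ 2) * (3/4) * (1/4 : ℝ) ^ j) := by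
        rw [ENNReal.ofReal_tsum_of_nonneg (fun j => by positivity)
          (Summable.mul_left _ (summable_geometric_of_lt_one (by norm_num) (by norm_num)))]
    _ = ENNReal.ofReal (8/3 * M ^ 3 / l ^ 2) := by
        rw [tsum_mul_left, tsum_geometric_of_lt_one (by norm_num) (by norm_num)]
        congr 1
        ring

/-- Pointwise Gaussian splitting in the far field. -/
lemma gaussian_split (x₀ : E3) {r R T t : ℝ} (hr : 0 < r) (hrR : r < R) (hT : 0 < T)
    (ht0 : 0 < t) (htT : t ≤ T) {x y : E3} (hx : ‖x - x₀‖ < r) (hy : R ≤ ‖y - x₀‖) :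
    Real.exp (-‖x - y‖^2 / (4*t))
      ≤ Real.exp (-(R - r)^2 / (4*t)) * Real.exp (-(‖y - x₀‖ - R)^2 / (4*T)) := by
  rw [← Real.exp_add]
  apply Real.exp_le_exp.2
  set s := ‖y - x₀‖ with hs
  have h1 : s - r ≤ ‖x - y‖ := by
    have htri : ‖y - x₀‖ ≤ ‖y - x‖ + ‖x - x₀‖ := norm_sub_le_norm_sub_add_norm_sub y x x₀
    have : ‖y - x‖ = ‖x - y‖ := norm_sub_rev y x
    linarith
  have hxynn : 0 ≤ s - r := by linarith
  have h2 : (R - r)^2 + (s - R)^2 ≤ ‖x - y‖^2 := by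
    have hsq : (s - r)^2 ≤ ‖x - y‖^2 := by nlinarith
    nlinarith [mul_nonneg (sub_nonneg.2 hy) (sub_nonneg.2 hrR.le)]
  have h3 : (s - R)^2 / (4*T) ≤ (s - R)^2 / (4*t) :=
    div_le_div_of_nonneg_left (by positivity) (by linarith) (by linarith)
  have h4 : ((R - r)^2 + (s - R)^2) / (4*t) ≤ ‖x - y‖^2 / (4*t) := by gcongr
  rw [add_div] at h4
  rw [neg_div, neg_div, neg_div]
  linarith

lemma ann_vol (x₀ : E3) {ρ : ℝ} (hρ : 0 ≤ ρ) :
    volume {y : E3 | ‖y - x₀‖ < ρ}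
      ≤ ENNReal.ofReal (ρ ^ 3 * (volume (ball (0:E3) 1)).toReal) := by
  have hset : {y : E3 | ‖y - x₀‖ < ρ} = ball x₀ ρ := by
    ext y; simp [mem_ball, dist_eq_norm]
  rw [hset, Measure.addHaar_ball volume x₀ hρ]
  rw [show Module.finrank ℝ E3 = 3 from finrank_euclideanSpace_fin]
  rw [ENNReal.ofReal_mul (by positivity)]
  exact mul_le_mul_right (le_of_eq (ENNReal.ofReal_toReal (measure_ball_lt_top).ne).symm) _

lemma sum_c {R T v₀ : ℝ} (hR : 0 < R) (hT : 0 < T) (hv : 0 ≤ v₀) :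
    Summable (fun n : ℕ =>
      Real.exp (-(n:ℝ)^2 / (4*T)) * ((R + (n:ℝ) + 1)^3 * v₀ + 8/3)) := by
  set q := Real.exp (-(1 / (4*T))) with hq
  have hq0 : 0 < q := Real.exp_pos _
  have hq1 : q < 1 := Real.exp_lt_one_iff.mpr (neg_neg_iff_pos.mpr (by positivity))
  set K := (R + 1)^3 * v₀ + 8/3 with hK
  have hs : Summable (fun n : ℕ => ((n:ℝ)+1)^3 * q^n) := by
    have h := summable_pow_mul_geometric_of_norm_lt_one (R := ℝ) 3
      (r := q) (by rwa [Real.norm_eq_abs, abs_of_pos hq0])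
    have h2 := (summable_nat_add_iff 1).2 h
    have h3 := h2.mul_left q⁻¹
    refine h3.congr fun n => ?_
    push_cast
    rw [pow_succ]
    field_simp
    ring
  refine Summable.of_nonneg_of_le (fun n => by positivity) (fun n => ?_) (hs.mul_left K)
  have hqn : Real.exp (-(n:ℝ)^2 / (4*T)) ≤ q ^ n := by
    rw [hq, ← Real.exp_nat_mul]
    apply Real.exp_le_exp.2
    have hnn : (n:ℝ) ≤ (n:ℝ)^2 := by
      have := Nat.le_self_pow (two_ne_zero) n
      calc (n:ℝ) ≤ ((n^2 : ℕ) : ℝ) := by exact_mod_cast this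
        _ = (n:ℝ)^2 := by push_cast; ring
    rw [neg_div, mul_neg]
    have : (n:ℝ) * (1 / (4*T)) = (n:ℝ) / (4*T) := by ring
    rw [this]
    apply neg_le_neg
    gcongr
  have hRn : (R + (n:ℝ) + 1)^3 ≤ (R+1)^3 * ((n:ℝ)+1)^3 := by
    rw [← mul_pow]
    apply pow_le_pow_left₀ (by positivity)
    nlinarith [mul_nonneg hR.le (Nat.cast_nonneg n)]
  have hbase : (R + (n:ℝ) + 1)^3 * v₀ + 8/3 ≤ K * ((n:ℝ)+1)^3 := by
    have h1 : (1:ℝ) ≤ ((n:ℝ)+1)^3 := by nlinarith [Nat.cast_nonneg (α := ℝ) n]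
    have h2 : (R + (n:ℝ) + 1)^3 * v₀ ≤ (R+1)^3 * v₀ * ((n:ℝ)+1)^3 := by
      calc (R + (n:ℝ) + 1)^3 * v₀ ≤ ((R+1)^3 * ((n:ℝ)+1)^3) * v₀ := by
            apply mul_le_mul_of_nonneg_right hRn hv
        _ = (R+1)^3 * v₀ * ((n:ℝ)+1)^3 := by ring
    have h3 : (8:ℝ)/3 ≤ 8/3 * ((n:ℝ)+1)^3 := by nlinarith
    rw [hK]
    nlinarith
  calc Real.exp (-(n:ℝ)^2 / (4*T)) * ((R + (n:ℝ) + 1)^3 * v₀ + 8/3)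
      ≤ q ^ n * (K * ((n:ℝ)+1)^3) := by
        apply mul_le_mul hqn hbase (by positivity) (by positivity)
    _ = K * (((n:ℝ)+1)^3 * q^n) := by ring

/-- **Far-field Gaussian tail estimate against weak-`L³` data (estimate (A1)–(A2)/I₃₂).**
For `0 < r < R` and `T > 0` there is `C = C(R,r,T)` such that for every `u₀ ∈ L^{3,∞}`,
`x ∈ B_r(x₀)` and `t ∈ (0,T]`,
`∫_{‖y-x₀‖ ≥ R} t^{-3/2} e^{-‖x-y‖²/(4t)} |u₀(y)| dy
  ≤ C ‖u₀‖_{L^{3,∞}} t^{-3/2} e^{-(R-r)²/(4t)}`. -/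
theorem farfield_gaussian_tail_estimate
    (x₀ : E3) (r R T : ℝ) (hr : 0 < r) (hrR : r < R) (hT : 0 < T) :
    ∃ C > 0, ∀ u₀ : E3 → E3, wL3 u₀ < ⊤ → ∀ x ∈ ball x₀ r, ∀ t ∈ Ioc (0:ℝ) T,
      (∫⁻ y in {y : E3 | R ≤ ‖y - x₀‖},
          ENNReal.ofReal (t ^ (-(3:ℝ)/2) * Real.exp (-‖x - y‖^2 / (4*t)) * ‖u₀ y‖))
        ≤ ENNReal.ofReal
            (C * (wL3 u₀).toReal * t ^ (-(3:ℝ)/2) * Real.exp (-(R - r)^2 / (4*t))) := by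
  classical
  have hR : 0 < R := hr.trans hrR
  set v₀ := (volume (ball (0:E3) 1)).toReal with hv₀
  have hv₀nn : 0 ≤ v₀ := ENNReal.toReal_nonneg
  set c : ℕ → ℝ := fun n => Real.exp (-(n:ℝ)^2 / (4*T)) * ((R + (n:ℝ) + 1)^3 * v₀ + 8/3)
    with hc
  have hcnn : ∀ n, 0 ≤ c n := fun n =>
    mul_nonneg (Real.exp_nonneg _) (by positivity)
  have hsum : Summable c := sum_c hR hT hv₀nn
  set C := ∑' n, c n with hCdef
  have hCpos : 0 < C := by
    have h0 : 0 < c 0 := by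
      rw [hc]
      simp only
      have : (8:ℝ)/3 > 0 := by norm_num
      positivity
    exact h0.trans_le (Summable.le_tsum hsum 0 fun j _ => hcnn j)
  refine ⟨C, hCpos, ?_⟩
  intro u₀ hWtop x hx t ht
  obtain ⟨ht0, htT⟩ := ht
  have hWne : wL3 u₀ ≠ ⊤ := hWtop.ne
  set M := (wL3 u₀).toReal with hM
  set SR := {y : E3 | R ≤ ‖y - x₀‖} with hSRdef
  have hSRmeas : MeasurableSet SR := by
    have hcont : Continuous fun y : E3 => ‖y - x₀‖ := (continuous_id.sub continuous_const).norm
    exact (isClosed_le continuous_const hcont).measurableSet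
  have hxnorm : ‖x - x₀‖ < r := by rwa [mem_ball, dist_eq_norm] at hx
  have ht32 : 0 ≤ t ^ (-(3:ℝ)/2) := (Real.rpow_pos_of_pos ht0 _).le
  by_cases hW0 : wL3 u₀ = 0
  · -- degenerate case : u₀ vanishes outside a null set
    have hlevel : ∀ m : ℕ, volume {y : E3 | (1:ℝ)/((m:ℝ)+1) < ‖u₀ y‖} = 0 := by
      intro m
      have h := wL3_dist_bound u₀ hWne (show (0:ℝ) < 1/((m:ℝ)+1) by positivity)
      rw [hW0] at h
      simpa using h
    have hN : volume {y : E3 | 0 < ‖u₀ y‖} = 0 := by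
      have hsub : {y : E3 | 0 < ‖u₀ y‖}
          ⊆ ⋃ m : ℕ, {y : E3 | (1:ℝ)/((m:ℝ)+1) < ‖u₀ y‖} := by
        intro y hy
        have h0 : 0 < ‖u₀ y‖ := hy
        obtain ⟨m, hm⟩ := exists_nat_gt (1 / ‖u₀ y‖)
        refine mem_iUnion.2 ⟨m, ?_⟩
        rw [mem_setOf_eq, div_lt_iff₀ (by positivity)]
        rw [div_lt_iff₀ h0] at hm
        nlinarith [h0]
      refine le_antisymm ?_ zero_le
      calc volume {y : E3 | 0 < ‖u₀ y‖}
          ≤ ∑' m : ℕ, volume {y : E3 | (1:ℝ)/((m:ℝ)+1) < ‖u₀ y‖} :=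
            (measure_mono hsub).trans (measure_iUnion_le _)
        _ = 0 := by
            have h' : ∀ m : ℕ, volume {y : E3 | ((m:ℝ)+1)⁻¹ < ‖u₀ y‖} = 0 := by
              intro m
              simpa [one_div] using hlevel m
            simp [h']
    set Nm := toMeasurable volume {y : E3 | 0 < ‖u₀ y‖} with hNm
    have hNmm : MeasurableSet Nm := measurableSet_toMeasurable _ _
    have hNm0 : volume Nm = 0 := by rw [hNm, measure_toMeasurable]; exact hN
    have hpt : ∀ y, ENNReal.ofReal (t ^ (-(3:ℝ)/2) * Real.exp (-‖x - y‖^2 / (4*t)) * ‖u₀ y‖)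
        ≤ Nm.indicator (fun _ => (⊤:ℝ≥0∞)) y := by
      intro y
      by_cases hy : 0 < ‖u₀ y‖
      · have hyN : y ∈ Nm :=
          subset_toMeasurable _ _ (show y ∈ {y : E3 | 0 < ‖u₀ y‖} from hy)
        rw [Set.indicator_of_mem hyN]
        exact le_top
      · have h0 : ‖u₀ y‖ = 0 := le_antisymm (not_lt.1 hy) (norm_nonneg _)
        simp [h0]
    refine le_trans (lintegral_mono hpt) ?_
    rw [lintegral_indicator_const hNmm]
    have hz : (volume.restrict SR) Nm = 0 := by
      rw [Measure.restrict_apply hNmm]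
      exact measure_mono_null inter_subset_left hNm0
    rw [hz, mul_zero]
    exact zero_le
  · -- main case
    have hMpos : 0 < M := ENNReal.toReal_pos hW0 hWne
    set A : ℕ → Set E3 :=
      fun n => {y : E3 | R + (n:ℝ) ≤ ‖y - x₀‖ ∧ ‖y - x₀‖ < R + (n:ℝ) + 1} with hA
    have hcont : Continuous fun y : E3 => ‖y - x₀‖ := (continuous_id.sub continuous_const).norm
    have hAmeas : ∀ n, MeasurableSet (A n) := by
      intro n
      have : A n = (fun y : E3 => ‖y - x₀‖) ⁻¹' (Ico (R + (n:ℝ)) (R + (n:ℝ) + 1)) := rfl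
      rw [this]
      exact hcont.measurable measurableSet_Ico
    have hcover : SR ⊆ ⋃ n, A n := by
      intro y hy
      have hy' : R ≤ ‖y - x₀‖ := hy
      refine mem_iUnion.2 ⟨⌊‖y - x₀‖ - R⌋₊, ?_, ?_⟩
      · have := Nat.floor_le (sub_nonneg.2 hy')
        linarith
      · have := Nat.lt_floor_add_one (‖y - x₀‖ - R)
        linarith
    have hstep1 : (∫⁻ y in SR,
          ENNReal.ofReal (t ^ (-(3:ℝ)/2) * Real.exp (-‖x - y‖^2 / (4*t)) * ‖u₀ y‖))
        ≤ ENNReal.ofReal (t ^ (-(3:ℝ)/2) * Real.exp (-(R - r)^2 / (4*t)))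
          * ∫⁻ y in SR, ENNReal.ofReal (Real.exp (-(‖y - x₀‖ - R)^2 / (4*T)))
              * ENNReal.ofReal ‖u₀ y‖ := by
      rw [← lintegral_const_mul' _ _ ENNReal.ofReal_ne_top]
      apply lintegral_mono_ae
      filter_upwards [ae_restrict_mem hSRmeas] with y hy
      have hy' : R ≤ ‖y - x₀‖ := hy
      have hgauss := gaussian_split x₀ hr hrR hT ht0 htT hxnorm hy'
      calc ENNReal.ofReal (t ^ (-(3:ℝ)/2) * Real.exp (-‖x - y‖^2 / (4*t)) * ‖u₀ y‖)
          ≤ ENNReal.ofReal ((t ^ (-(3:ℝ)/2) * Real.exp (-(R - r)^2 / (4*t)))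
              * (Real.exp (-(‖y - x₀‖ - R)^2 / (4*T)) * ‖u₀ y‖)) := by
            apply ENNReal.ofReal_le_ofReal
            calc t ^ (-(3:ℝ)/2) * Real.exp (-‖x - y‖^2 / (4*t)) * ‖u₀ y‖
                ≤ t ^ (-(3:ℝ)/2) * (Real.exp (-(R - r)^2 / (4*t))
                    * Real.exp (-(‖y - x₀‖ - R)^2 / (4*T))) * ‖u₀ y‖ :=
                  mul_le_mul_of_nonneg_right
                    (mul_le_mul_of_nonneg_left hgauss ht32) (norm_nonneg _)
              _ = (t ^ (-(3:ℝ)/2) * Real.exp (-(R - r)^2 / (4*t)))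
                  * (Real.exp (-(‖y - x₀‖ - R)^2 / (4*T)) * ‖u₀ y‖) := by ring
        _ = ENNReal.ofReal (t ^ (-(3:ℝ)/2) * Real.exp (-(R - r)^2 / (4*t)))
            * (ENNReal.ofReal (Real.exp (-(‖y - x₀‖ - R)^2 / (4*T)))
              * ENNReal.ofReal ‖u₀ y‖) := by
            rw [ENNReal.ofReal_mul (by positivity), ENNReal.ofReal_mul (Real.exp_nonneg _)]
    have hstep2 : (∫⁻ y in SR, ENNReal.ofReal (Real.exp (-(‖y - x₀‖ - R)^2 / (4*T)))
          * ENNReal.ofReal ‖u₀ y‖) ≤ ENNReal.ofReal (M * C) := by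
      calc (∫⁻ y in SR, ENNReal.ofReal (Real.exp (-(‖y - x₀‖ - R)^2 / (4*T)))
            * ENNReal.ofReal ‖u₀ y‖)
          ≤ ∫⁻ y in ⋃ n, A n, ENNReal.ofReal (Real.exp (-(‖y - x₀‖ - R)^2 / (4*T)))
            * ENNReal.ofReal ‖u₀ y‖ := lintegral_mono_set hcover
        _ ≤ ∑' n : ℕ, ∫⁻ y in A n, ENNReal.ofReal (Real.exp (-(‖y - x₀‖ - R)^2 / (4*T)))
            * ENNReal.ofReal ‖u₀ y‖ := by
            refine le_trans (lintegral_mono' Measure.restrict_iUnion_le le_rfl) ?_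
            rw [lintegral_sum_measure]
        _ ≤ ∑' n : ℕ, ENNReal.ofReal (M * c n) := by
            refine ENNReal.tsum_le_tsum fun n => ?_
            have hub : ∀ y ∈ A n, Real.exp (-(‖y - x₀‖ - R)^2 / (4*T))
                ≤ Real.exp (-(n:ℝ)^2 / (4*T)) := by
              intro y hy
              obtain ⟨h1, h2⟩ := hy
              apply Real.exp_le_exp.2
              rw [neg_div, neg_div]
              apply neg_le_neg
              have hsq : ((n:ℝ))^2 ≤ (‖y - x₀‖ - R)^2 :=
                pow_le_pow_left₀ (Nat.cast_nonneg n) (by linarith) 2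
              gcongr
            calc (∫⁻ y in A n, ENNReal.ofReal (Real.exp (-(‖y - x₀‖ - R)^2 / (4*T)))
                  * ENNReal.ofReal ‖u₀ y‖)
                ≤ ∫⁻ y in A n, ENNReal.ofReal (Real.exp (-(n:ℝ)^2 / (4*T)))
                  * ENNReal.ofReal ‖u₀ y‖ := by
                  apply lintegral_mono_ae
                  filter_upwards [ae_restrict_mem (hAmeas n)] with y hy
                  exact mul_le_mul_left (ENNReal.ofReal_le_ofReal (hub y hy)) _
              _ = ENNReal.ofReal (Real.exp (-(n:ℝ)^2 / (4*T)))
                  * ∫⁻ y in A n, ENNReal.ofReal ‖u₀ y‖ :=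
                  lintegral_const_mul' _ _ ENNReal.ofReal_ne_top
              _ ≤ ENNReal.ofReal (Real.exp (-(n:ℝ)^2 / (4*T)))
                  * (ENNReal.ofReal M * volume (A n)
                    + ENNReal.ofReal (8/3 * M^3 / M^2)) :=
                  mul_le_mul_right (wL3_setLIntegral_bound u₀ hWne (A n) hMpos) _
              _ ≤ ENNReal.ofReal (Real.exp (-(n:ℝ)^2 / (4*T)))
                  * (ENNReal.ofReal M * ENNReal.ofReal ((R + (n:ℝ) + 1)^3 * v₀)
                    + ENNReal.ofReal (8/3 * M^3 / M^2)) := by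
                  gcongr
                  refine le_trans (measure_mono ?_) (ann_vol x₀ (ρ := R + (n:ℝ) + 1)
                    (by positivity))
                  intro y hy
                  exact hy.2
              _ = ENNReal.ofReal (M * c n) := by
                  rw [← ENNReal.ofReal_mul hMpos.le,
                    ← ENNReal.ofReal_add (by positivity) (by positivity),
                    ← ENNReal.ofReal_mul (Real.exp_nonneg _)]
                  congr 1
                  have hM2 : M^2 ≠ 0 := by positivity
                  rw [hc]
                  simp only
                  field_simp
        _ = ENNReal.ofReal (∑' n : ℕ, M * c n) :=
            (ENNReal.ofReal_tsum_of_nonneg (fun n => mul_nonneg hMpos.le (hcnn n))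
              (hsum.mul_left M)).symm
        _ = ENNReal.ofReal (M * C) := by rw [tsum_mul_left]
    calc (∫⁻ y in SR,
          ENNReal.ofReal (t ^ (-(3:ℝ)/2) * Real.exp (-‖x - y‖^2 / (4*t)) * ‖u₀ y‖))
        ≤ ENNReal.ofReal (t ^ (-(3:ℝ)/2) * Real.exp (-(R - r)^2 / (4*t)))
          * ENNReal.ofReal (M * C) := le_trans hstep1 (mul_le_mul_right hstep2 _)
      _ = ENNReal.ofReal (C * M * t ^ (-(3:ℝ)/2) * Real.exp (-(R - r)^2 / (4*t))) := by
          rw [← ENNReal.ofReal_mul (by positivity)]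
          congr 1
          ring
end
end
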